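/- Define τ_C(n) as the minimum of 1 + |N| over all representations n = (2^r − 1) − Σ_{j∈N}(2^j − 1) with r a positive integer and N a finite multiset of positive integers, and τ_P(n) as the minimum number of parts in a representation of n as a sum of numbers of the form 2^d − 1. Then τ_C(n) = τ_P(f(n)) and τ_P(n) = τ_C(f(n)), where f is the dual function: f(n) = n if n = 2^k − 1, else f(n) = 3·2^⌊log₂ n⌋ − n − 2. -/

import Mathlib

def nu (d : ℕ) : ℕ := 2 ^ d - 1

def IsABP (n : ℕ) (P : Multiset ℕ) : Prop :=
  (∀ i ∈ P, 1 ≤ i) ∧ (P.map nu).sum = n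

noncomputable def tauP (n : ℕ) : ℕ :=
  sInf {k | ∃ P : Multiset ℕ, IsABP n P ∧ P.card = k}

def IsSABP (n : ℕ) (P N : Multiset ℕ) : Prop :=
  (∀ i ∈ P, 1 ≤ i) ∧ (∀ j ∈ N, 1 ≤ j) ∧
    (n : ℤ) = ((P.map nu).sum : ℤ) - ((N.map nu).sum : ℤ)

noncomputable def tau (n : ℕ) : ℕ :=
  sInf {k | ∃ P N : Multiset ℕ, IsSABP n P N ∧ P.card + N.card = k}

noncomputable def tauC (n : ℕ) : ℕ :=
  sInf {k | ∃ (r : ℕ) (N : Multiset ℕ), IsSABP n {r} N ∧ 1 + N.card = k}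

def greedy : ℕ → Multiset ℕ
  | 0 => 0
  | (n+1) => Nat.log 2 (n+2) ::ₘ greedy (n + 1 - nu (Nat.log 2 (n+2)))
  decreasing_by
    have h1 : 0 < Nat.log 2 (n+2) := Nat.log_pos one_lt_two (by omega)
    have h2 : 2 ^ 1 ≤ 2 ^ Nat.log 2 (n+2) := Nat.pow_le_pow_right (by norm_num) h1
    simp only [nu] at *
    omega

open Classical in
noncomputable def dualf (n : ℕ) : ℕ :=
  if ∃ k : ℕ, 1 ≤ k ∧ n = 2 ^ k - 1 then n else 3 * 2 ^ Nat.log 2 n - n - 2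

def parentT (v : ℕ × ℕ) : ℕ × ℕ := (v.1 + 1, v.2 / 2)

def levelT (v : ℕ × ℕ) : ℕ := v.1 + 1

def treeGraph : SimpleGraph (ℕ × ℕ) where
  Adj u v := parentT u = v ∨ parentT v = u
  symm := ⟨fun u v h => by tauto⟩
  loopless := ⟨fun v h => by simp [parentT, Prod.ext_iff] at h⟩

noncomputable def cutCard (S : Finset (ℕ × ℕ)) : ℕ :=
  Set.ncard {v : ℕ × ℕ | ¬ ((v ∈ S) ↔ (parentT v ∈ S))}

def leafCount (S : Finset (ℕ × ℕ)) : ℕ := (S.filter (fun v => v.1 = 0)).card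

def completeSubtree (v : ℕ × ℕ) : Finset (ℕ × ℕ) :=
  (Finset.range (v.1 + 1)).biUnion (fun a =>
    (Finset.Ico (v.2 * 2 ^ (v.1 - a)) ((v.2 + 1) * 2 ^ (v.1 - a))).image (fun i => (a, i)))

def Bd (d : ℕ) : Finset (ℕ × ℕ) := completeSubtree (d - 1, 0)

def cutBd (d : ℕ) (X : Finset (ℕ × ℕ)) : ℕ :=
  ((Bd d).filter (fun v => v.1 + 1 < d ∧ ¬((v ∈ X) ↔ parentT v ∈ X))).card

noncomputable def deltaB (d i : ℕ) : ℕ :=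
  sInf {c | ∃ X ⊆ Bd d, X.card = i ∧ cutBd d X = c}

noncomputable def tauC0 (n : ℕ) : ℕ := if n = 0 then 0 else tauC n

def fS (S : Finset (ℕ × ℕ)) (v : ℕ × ℕ) : ℤ :=
  if v ∈ S ∧ parentT v ∉ S then 2 ^ levelT v - 1
  else if v ∉ S ∧ parentT v ∈ S then -(2 ^ levelT v - 1)
  else 0

lemma isABP_replicate (n : ℕ) : IsABP n (Multiset.replicate n 1) := by
  constructor
  · intro i hi; rw [Multiset.eq_of_mem_replicate hi]
  · simp [Multiset.map_replicate, nu]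

lemma tauP_le {n : ℕ} {P : Multiset ℕ} (h : IsABP n P) : tauP n ≤ P.card :=
  Nat.sInf_le ⟨P, h, rfl⟩

lemma tauP_exists (n : ℕ) : ∃ P, IsABP n P ∧ P.card = tauP n :=
  Nat.sInf_mem (⟨n, Multiset.replicate n 1, isABP_replicate n, by simp⟩ :
    {k | ∃ P : Multiset ℕ, IsABP n P ∧ P.card = k}.Nonempty)

lemma tauP_pos {n : ℕ} (hn : 1 ≤ n) : 1 ≤ tauP n := by
  obtain ⟨P, ⟨_, hs⟩, hc⟩ := tauP_exists n
  rcases Multiset.empty_or_exists_mem P with h | ⟨a, ha⟩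
  · simp [h] at hs; omega
  · have : 1 ≤ P.card := Multiset.card_pos_iff_exists_mem.2 ⟨a, ha⟩
    omega

lemma nu_mono {i j : ℕ} (h : i ≤ j) : nu i ≤ nu j := by
  have := Nat.pow_le_pow_right (by norm_num : 1 ≤ 2) h
  simp [nu]; omega

lemma tauP_nu {d : ℕ} (hd : 1 ≤ d) : tauP (nu d) = 1 := by
  have h1 : tauP (nu d) ≤ 1 := tauP_le (P := {d}) ⟨by simpa using hd, by simp⟩
  have h2 : 1 ≤ tauP (nu d) := tauP_pos (by have : (2:ℕ)^1 ≤ 2^d := Nat.pow_le_pow_right (by norm_num) hd; simp [nu]; omega)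
  omega

lemma mem_le_sum {P : Multiset ℕ} {j : ℕ} (h : j ∈ P) : nu j ≤ (P.map nu).sum :=
  Multiset.le_sum_of_mem (Multiset.mem_map_of_mem nu h)

/-- Lipschitz: tauP n ≤ tauP (n+1) + 1 -/
lemma tauP_lip (n : ℕ) : tauP n ≤ tauP (n + 1) + 1 := by
  obtain ⟨P, ⟨hpos, hs⟩, hc⟩ := tauP_exists (n + 1)
  have hPne : P ≠ 0 := by
    intro h; simp [h] at hs
  obtain ⟨j, hj⟩ := Multiset.exists_mem_of_ne_zero hPne
  obtain ⟨P', rfl⟩ := Multiset.exists_cons_of_mem hj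
  have hj1 : 1 ≤ j := hpos j (Multiset.mem_cons_self _ _)
  simp [Multiset.sum_cons] at hs
  rcases eq_or_lt_of_le hj1 with h1 | h2
  · -- j = 1
    have : IsABP n P' := by
      constructor
      · intro i hi; exact hpos i (Multiset.mem_cons_of_mem hi)
      · have : nu j = 1 := by simp [nu, ← h1]
        omega
    have := tauP_le this
    simp at hc; omega
  · -- j ≥ 2 : replace by two copies of j-1
    have hnu : nu (j-1) + nu (j-1) + 1 = nu j := by
      have h2j : 2 ≤ j := h2
      have h : (2:ℕ)^j = 2^(j-1) + 2^(j-1) := by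
        rw [← two_mul, ← pow_succ']; congr 1; omega
      have hp : 1 ≤ (2:ℕ)^(j-1) := Nat.one_le_two_pow
      simp only [nu]; omega
    have : IsABP n ((j-1) ::ₘ (j-1) ::ₘ P') := by
      constructor
      · intro i hi
        rcases Multiset.mem_cons.1 hi with rfl | hi
        · omega
        rcases Multiset.mem_cons.1 hi with rfl | hi
        · omega
        · exact hpos i (Multiset.mem_cons_of_mem hi)
      · simp [Multiset.sum_cons]
        omega
    have := tauP_le this
    simp at this hc ⊢
    omega

/-- Extraction: from a multiset with nu-parts bounded by c and total ≥ t, extract a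
sub-multiset with nu-sum in [t, t+c). -/
lemma extract (c : ℕ) : ∀ (P : Multiset ℕ) (t : ℕ), 1 ≤ t → (∀ j ∈ P, nu j ≤ c) →
    t ≤ (P.map nu).sum → ∃ Q, Q ≤ P ∧ t ≤ (Q.map nu).sum ∧ (Q.map nu).sum < t + c := by
  intro P
  induction P using Multiset.induction with
  | empty => intro t ht _ hsum; simp at hsum; omega
  | cons a P ih =>
    intro t ht hb hsum
    by_cases hta : t ≤ nu a
    · refine ⟨{a}, ?_, ?_, ?_⟩
      · simpa using Multiset.cons_le_cons a (Multiset.zero_le P)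
      · simpa using hta
      · have := hb a (Multiset.mem_cons_self _ _)
        simp; omega
    · have hsum' : t - nu a ≤ (P.map nu).sum := by
        simp [Multiset.sum_cons] at hsum; omega
      obtain ⟨Q, hQle, h1, h2⟩ := ih (t - nu a) (by omega)
        (fun j hj => hb j (Multiset.mem_cons_of_mem hj)) hsum'
      refine ⟨a ::ₘ Q, Multiset.cons_le_cons a hQle, ?_, ?_⟩
      · simp [Multiset.sum_cons]; omega
      · simp [Multiset.sum_cons]; omega

lemma nu_lt_imp {i j : ℕ} (h : nu i < nu j) : i < j := by
  by_contra hc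
  exact absurd (nu_mono (by omega : j ≤ i)) (by omega)

/-- Pump: increase the count of (D-1)-parts without increasing cardinality. -/
lemma pump (x D : ℕ) (hD : 2 ≤ D) (hx1 : 2^D ≤ x + 1)
    (ih : ∀ y, y < x → 1 ≤ y → ∀ Q : Multiset ℕ, IsABP y Q →
      ∃ A, IsABP (y + 1 - 2 ^ Nat.log 2 (y+1)) A ∧ A.card + 1 ≤ Q.card) :
    ∀ k, k ≤ 2 → ∀ P, IsABP x P → (∀ j ∈ P, j ≤ D - 1) →
    ∃ P', IsABP x P' ∧ P'.card ≤ P.card ∧ (∀ j ∈ P', j ≤ D-1) ∧ k ≤ P'.count (D-1) := by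
  intro k
  induction k with
  | zero => intro _ P hP hb; exact ⟨P, hP, le_refl _, hb, Nat.zero_le _⟩
  | succ k ihk =>
    intro hk2 P hP hb
    obtain ⟨P₁, hP₁, hc₁, hb₁, hcnt₁⟩ := ihk (by omega) P hP hb
    by_cases hdone : k + 1 ≤ P₁.count (D-1)
    · exact ⟨P₁, hP₁, hc₁, hb₁, hdone⟩
    · -- count (D-1) P₁ = k ≤ 1
      have hcnt : P₁.count (D-1) = k := by omega
      set R := P₁.filter (fun j => ¬ j = D-1) with hRdef
      have hsplit : Multiset.replicate k (D-1) + R = P₁ := by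
        rw [← hcnt]
        have := Multiset.filter_add_not (fun j => j = D-1) P₁
        rw [← Multiset.filter_eq'] ; exact this
      -- facts about R
      have hRb : ∀ j ∈ R, nu j ≤ nu (D-2) := by
        intro j hj
        have h1 := Multiset.mem_filter.1 hj
        have h2 := hb₁ j h1.1
        have h3 : ¬ j = D - 1 := h1.2
        exact nu_mono (by omega)
      have hRpos : ∀ j ∈ R, 1 ≤ j := fun j hj => hP₁.1 j (Multiset.mem_filter.1 hj).1
      have hsum₁ : (P₁.map nu).sum = x := hP₁.2
      have hsumsplit : k * nu (D-1) + (R.map nu).sum = x := by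
        rw [← hsum₁, ← hsplit]
        simp [Multiset.map_add, Multiset.sum_add, Multiset.map_replicate, Multiset.sum_replicate, mul_comm]
      -- numeric facts
      have hpow1 : (2:ℕ)^D = 2^(D-1) + 2^(D-1) := by
        rw [← two_mul, ← pow_succ']; congr 1; omega
      have hpow2 : (2:ℕ)^(D-1) = 2^(D-2) + 2^(D-2) := by
        rw [← two_mul, ← pow_succ']; congr 1; omega
      have hp1 : 1 ≤ (2:ℕ)^(D-2) := Nat.one_le_two_pow
      have hnu1 : nu (D-1) = 2^(D-1) - 1 := rfl
      have hnu2 : nu (D-2) = 2^(D-2) - 1 := rfl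
      have hRsum : nu (D-1) ≤ (R.map nu).sum := by
        have hk1 : k ≤ 1 := by omega
        have : k * nu (D-1) ≤ 1 * nu (D-1) := Nat.mul_le_mul_right _ hk1
        simp only [hnu1] at *
        omega
      -- extract
      obtain ⟨Q, hQle, hs1, hs2⟩ := extract (nu (D-2)) R (nu (D-1))
        (by simp only [hnu1]; omega) hRb hRsum
      set s := (Q.map nu).sum with hsdef
      have hslt : s < x := by
        simp only [hnu1, hnu2] at hs1 hs2 ⊢
        omega
      have hs_pos : 1 ≤ s := by simp only [hnu1] at hs1; omega
      have hlog : Nat.log 2 (s+1) = D - 1 := by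
        apply Nat.log_eq_of_pow_le_of_lt_pow
        · simp only [hnu1] at hs1; omega
        · have : D - 1 + 1 = D := by omega
          rw [this]
          simp only [hnu1, hnu2] at hs2; omega
      have hQABP : IsABP s Q := ⟨fun j hj => hRpos j (Multiset.mem_of_le hQle hj), rfl⟩
      obtain ⟨A, hA, hAcard⟩ := ih s hslt hs_pos Q hQABP
      rw [hlog] at hA
      have hAsum : (A.map nu).sum = s - nu (D-1) := by
        have := hA.2
        simp only [hnu1] at *
        omega
      -- decompose R = Q + R'
      obtain ⟨R', hR'⟩ := Multiset.le_iff_exists_add.1 hQle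
      -- build P'
      refine ⟨Multiset.replicate (k+1) (D-1) + (A + R'), ⟨?_, ?_⟩, ?_, ?_, ?_⟩
      · intro j hj
        rcases Multiset.mem_add.1 hj with hj | hj
        · have := Multiset.eq_of_mem_replicate hj; omega
        · rcases Multiset.mem_add.1 hj with hj | hj
          · exact hA.1 j hj
          · exact hRpos j (by rw [hR']; exact Multiset.mem_add.2 (Or.inr hj))
      · -- sum
        have hRsum' : (R.map nu).sum = s + (R'.map nu).sum := by
          rw [hR']; simp [Multiset.map_add, Multiset.sum_add]; exact hsdef.symm
        simp only [Multiset.map_add, Multiset.sum_add, Multiset.map_replicate,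
          Multiset.sum_replicate, smul_eq_mul]
        rw [hAsum]
        simp only [hnu1] at hs1 hsumsplit hRsum' ⊢
        have hks : k * (2^(D-1) - 1) + (R.map nu).sum = x := hsumsplit
        have : (k+1) * (2^(D-1)-1) = k * (2^(D-1)-1) + (2^(D-1)-1) := by ring
        omega
      · -- card
        have hcard1 : P₁.card = k + R.card := by
          rw [← hsplit]; simp
        have hcardR : R.card = Q.card + R'.card := by rw [hR']; simp
        simp only [Multiset.card_add, Multiset.card_replicate]
        omega
      · -- bounds
        intro j hj
        rcases Multiset.mem_add.1 hj with hj | hj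
        · have := Multiset.eq_of_mem_replicate hj; omega
        · rcases Multiset.mem_add.1 hj with hj | hj
          · -- j ∈ A : nu j ≤ sum A < nu (D-1)
            have h1 : nu j ≤ (A.map nu).sum := mem_le_sum hj
            rw [hAsum] at h1
            have h2 : nu j < nu (D-1) := by
              simp only [hnu1, hnu2] at h1 hs2 hs1 ⊢
              omega
            have := nu_lt_imp h2
            omega
          · have : j ∈ R := by rw [hR']; exact Multiset.mem_add.2 (Or.inr hj)
            have := (Multiset.mem_filter.1 this).2
            have hle := hb₁ j (by rw [← hsplit]; exact Multiset.mem_add.2 (Or.inr ‹j ∈ R›))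
            omega
      · -- count
        simp only [Multiset.count_add, Multiset.count_replicate, if_pos rfl, if_true]
        omega

/-- Key lemma: any ABP of x has at least one more part than some ABP of x minus the
largest Mersenne number ≤ x. -/
lemma KL : ∀ x, 1 ≤ x → ∀ P : Multiset ℕ, IsABP x P →
    ∃ A, IsABP (x + 1 - 2 ^ Nat.log 2 (x+1)) A ∧ A.card + 1 ≤ P.card := by
  intro x
  induction x using Nat.strong_induction_on with
  | _ x ih =>
    intro hx P hP
    set D := Nat.log 2 (x+1) with hDdef
    have hx1 : 2^D ≤ x + 1 := Nat.pow_log_le_self 2 (by omega)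
    have hx2 : x + 1 < 2^(D+1) := Nat.lt_pow_succ_log_self (by norm_num) _
    have hD1 : 1 ≤ D := Nat.log_pos (by norm_num) (by omega)
    have hbound : ∀ j ∈ P, j ≤ D := by
      intro j hj
      have h1 : nu j ≤ x := by rw [← hP.2]; exact mem_le_sum hj
      by_contra hc
      have : nu (D+1) ≤ nu j := nu_mono (by omega)
      have h2 : nu (D+1) = 2^(D+1) - 1 := rfl
      have h3 : nu j = 2^j - 1 := rfl
      omega
    by_cases hmem : D ∈ P
    · obtain ⟨P', rfl⟩ := Multiset.exists_cons_of_mem hmem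
      refine ⟨P', ⟨fun i hi => hP.1 i (Multiset.mem_cons_of_mem hi), ?_⟩, by simp⟩
      have := hP.2
      simp only [Multiset.map_cons, Multiset.sum_cons] at this
      have h3 : nu D = 2^D - 1 := rfl
      omega
    · have hb' : ∀ j ∈ P, j ≤ D - 1 := by
        intro j hj
        have := hbound j hj
        have : j ≠ D := fun h => hmem (h ▸ hj)
        have := hbound j hj
        omega
      have hD2 : 2 ≤ D := by
        by_contra hc
        have hDeq : D = 1 := by omega
        have hPne : P ≠ 0 := by
          intro h; rw [h] at hP; have := hP.2; simp at this; omega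
        obtain ⟨j, hj⟩ := Multiset.exists_mem_of_ne_zero hPne
        have := hP.1 j hj
        have := hb' j hj
        omega
      obtain ⟨P', hP', hcard', hb'', hcnt⟩ := pump x D hD2 hx1 (fun y hy hy1 Q hQ => ih y hy hy1 Q hQ) 2 (le_refl _) P hP hb'
      have hrep : Multiset.replicate 2 (D-1) ≤ P' := Multiset.le_count_iff_replicate_le.1 hcnt
      obtain ⟨R₂, hR₂⟩ := Multiset.le_iff_exists_add.1 hrep
      have hpow1 : (2:ℕ)^D = 2^(D-1) + 2^(D-1) := by
        rw [← two_mul, ← pow_succ']; congr 1; omega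
      have hnu1 : nu (D-1) = 2^(D-1) - 1 := rfl
      have hp1 : 1 ≤ (2:ℕ)^(D-1) := Nat.one_le_two_pow
      have hsum₂ : 2 * nu (D-1) + (R₂.map nu).sum = x := by
        have h0 := hP'.2
        rw [hR₂] at h0
        simp only [Multiset.map_add, Multiset.sum_add, Multiset.map_replicate,
          Multiset.sum_replicate, smul_eq_mul] at h0
        exact h0
      have hR₂ne : R₂ ≠ 0 := by
        intro h
        rw [h] at hsum₂
        simp only [hnu1] at hsum₂
        simp at hsum₂
        omega
      obtain ⟨j, hjmem⟩ := Multiset.exists_mem_of_ne_zero hR₂ne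
      obtain ⟨R₃, hR₃⟩ := Multiset.exists_cons_of_mem hjmem
      have hjpos : 1 ≤ j := hP'.1 j (by rw [hR₂]; exact Multiset.mem_add.2 (Or.inr hjmem))
      have hR₃pos : ∀ i ∈ R₃, 1 ≤ i := by
        intro i hi
        exact hP'.1 i (by rw [hR₂, hR₃]; exact Multiset.mem_add.2 (Or.inr (Multiset.mem_cons_of_mem hi)))
      have hsum₃ : nu j + (R₃.map nu).sum = (R₂.map nu).sum := by
        rw [hR₃]; simp [Multiset.sum_cons]
      have hcardP' : P'.card = 2 + (1 + R₃.card) := by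
        rw [hR₂, hR₃]; simp; omega
      rcases eq_or_lt_of_le hjpos with h1 | h2
      · -- j = 1
        refine ⟨R₃, ⟨hR₃pos, ?_⟩, ?_⟩
        · have hnuj : nu j = 1 := by simp [nu, ← h1]
          simp only [hnu1] at hsum₂
          omega
        · omega
      · -- j ≥ 2
        have hpowj : (2:ℕ)^j = 2^(j-1) + 2^(j-1) := by
          rw [← two_mul, ← pow_succ']; congr 1; omega
        have hpj : 1 ≤ (2:ℕ)^(j-1) := Nat.one_le_two_pow
        refine ⟨(j-1) ::ₘ (j-1) ::ₘ R₃, ⟨?_, ?_⟩, ?_⟩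
        · intro i hi
          rcases Multiset.mem_cons.1 hi with rfl | hi
          · omega
          rcases Multiset.mem_cons.1 hi with rfl | hi
          · omega
          · exact hR₃pos i hi
        · simp only [Multiset.map_cons, Multiset.sum_cons]
          have hnuj : nu j = 2^j - 1 := rfl
          have hnuj1 : nu (j-1) = 2^(j-1) - 1 := rfl
          simp only [hnu1] at hsum₂
          omega
        · simp only [Multiset.card_cons]
          omega

/-- Greedy step -/
lemma tauP_step' (x D : ℕ) (hx : 1 ≤ x) (hD : Nat.log 2 (x+1) = D) :
    tauP x = 1 + tauP (x + 1 - 2 ^ D) := by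
  have hx1 : 2^D ≤ x + 1 := hD ▸ Nat.pow_log_le_self 2 (by omega)
  have hD1 : 1 ≤ D := hD ▸ Nat.log_pos (by norm_num) (by omega)
  have hp : 1 ≤ (2:ℕ)^D := Nat.one_le_two_pow
  apply le_antisymm
  · obtain ⟨A, hA, hAcard⟩ := tauP_exists (x + 1 - 2^D)
    have : IsABP x (D ::ₘ A) := by
      constructor
      · intro i hi
        rcases Multiset.mem_cons.1 hi with rfl | hi
        · exact hD1
        · exact hA.1 i hi
      · rw [Multiset.map_cons, Multiset.sum_cons, hA.2]
        simp only [nu]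
        omega
    have := tauP_le this
    simp only [Multiset.card_cons] at this
    omega
  · obtain ⟨P, hP, hPcard⟩ := tauP_exists x
    obtain ⟨A, hA, hAcard⟩ := KL x hx P hP
    rw [hD] at hA
    have := tauP_le hA
    omega

lemma tauP_step (x : ℕ) (hx : 1 ≤ x) :
    tauP x = 1 + tauP (x + 1 - 2 ^ Nat.log 2 (x+1)) :=
  tauP_step' x _ hx rfl

lemma pow_mul_sub (L s : ℕ) : (2:ℕ)^L * (2^s - 1) = 2^(L+s) - 2^L := by
  rw [Nat.mul_sub, mul_one, ← pow_add]

lemma lemmaM (L : ℕ) (hL : 1 ≤ L) :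
    ∀ s a, 1 ≤ a → a ≤ 2^L - 1 → tauP a ≤ tauP (a + 2^(L+1) * (2^s - 1)) := by
  intro s
  induction s with
  | zero => intro a _ _; simp
  | succ s ihs =>
    intro a ha1 ha2
    have hpL : 1 ≤ (2:ℕ)^L := Nat.one_le_two_pow
    by_cases hedge : a = 2^L - 1
    · -- a = nu L, tauP a = 1
      have h1 : tauP a = 1 := by
        have : a = nu L := by simp only [nu]; omega
        rw [this]; exact tauP_nu hL
      have h2 : 1 ≤ tauP (a + 2^(L+1) * (2^(s+1) - 1)) := tauP_pos (by omega)
      omega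
    · have ha2' : a ≤ 2^L - 2 := by omega
      -- arithmetic facts
      have e1 : (2:ℕ)^(L+1) * (2^(s+1) - 1) = 2^(L+s+2) - 2^(L+1) := by
        rw [pow_mul_sub]; congr 2; omega
      have e2 : (2:ℕ)^(L+1) * (2^s - 1) = 2^(L+s+1) - 2^(L+1) := by
        rw [pow_mul_sub]; congr 2; omega
      have f1 : (2:ℕ)^(L+s+2) = 2^(L+s+1) + 2^(L+s+1) := by
        rw [← two_mul, ← pow_succ']
      have f2 : (2:ℕ)^(L+1) ≤ 2^(L+s+1) := Nat.pow_le_pow_right (by norm_num) (by omega)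
      have f3 : (2:ℕ)^(L+1) = 2^L + 2^L := by rw [← two_mul, ← pow_succ']
      set b := a + 2^(L+1) * (2^(s+1) - 1) with hbdef
      have hb1 : 1 ≤ b := by omega
      have hlog : Nat.log 2 (b + 1) = L + s + 1 := by
        apply Nat.log_eq_of_pow_le_of_lt_pow
        · rw [hbdef, e1]; omega
        · rw [hbdef, e1]
          have : L + s + 1 + 1 = L + s + 2 := by omega
          rw [this]; omega
      have hstep := tauP_step' b (L+s+1) hb1 hlog
      have hinner : b + 1 - 2^(L+s+1) = (a+1) + 2^(L+1) * (2^s - 1) := by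
        rw [hbdef, e1, e2]; omega
      rw [hinner] at hstep
      have hih := ihs (a+1) (by omega) (by omega)
      have hlip := tauP_lip a
      omega

lemma isSABP_iff (n r : ℕ) (N : Multiset ℕ) :
    IsSABP n {r} N ↔ (1 ≤ r ∧ (∀ j ∈ N, 1 ≤ j) ∧ (N.map nu).sum + n = nu r) := by
  unfold IsSABP
  constructor
  · rintro ⟨h1, h2, h3⟩
    refine ⟨by simpa using h1 r (Multiset.mem_singleton_self r), h2, ?_⟩
    simp only [Multiset.map_singleton, Multiset.sum_singleton] at h3
    omega
  · rintro ⟨h1, h2, h3⟩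
    refine ⟨by simpa using h1, h2, ?_⟩
    simp only [Multiset.map_singleton, Multiset.sum_singleton]
    omega

lemma tauC_le {n r : ℕ} {N : Multiset ℕ} (h : IsSABP n {r} N) : tauC n ≤ 1 + N.card :=
  Nat.sInf_le ⟨r, N, h, rfl⟩

lemma tauC_exists (n : ℕ) (hn : 1 ≤ n) :
    ∃ r N, IsSABP n {r} N ∧ 1 + N.card = tauC n := by
  have hwit : IsSABP n {n} (Multiset.replicate (2^n - 1 - n) 1) := by
    rw [isSABP_iff]
    refine ⟨hn, fun j hj => by rw [Multiset.eq_of_mem_replicate hj], ?_⟩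
    have h1 : n < 2^n := Nat.lt_two_pow_self (n := n)
    simp [Multiset.map_replicate, Multiset.sum_replicate, nu]
    omega
  exact Nat.sInf_mem (⟨1 + _, n, _, hwit, rfl⟩ :
    {k | ∃ r N, IsSABP n {r} N ∧ 1 + N.card = k}.Nonempty)

lemma tauC_nu {k : ℕ} (hk : 1 ≤ k) : tauC (2^k - 1) = 1 := by
  have h1 : tauC (2^k - 1) ≤ 1 := by
    have : IsSABP (2^k - 1) {k} 0 := by
      rw [isSABP_iff]
      exact ⟨hk, by simp, by simp [nu]⟩
    simpa using tauC_le this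
  have h2 : 1 ≤ tauC (2^k - 1) := by
    have hpos : 1 ≤ 2^k - 1 := by
      have : (2:ℕ)^1 ≤ 2^k := Nat.pow_le_pow_right (by norm_num) hk
      omega
    obtain ⟨r, N, _, heq⟩ := tauC_exists _ hpos
    omega
  omega

/-- the core duality for non-special n -/
lemma core (n L : ℕ) (hL : 1 ≤ L) (hl : 2^L ≤ n) (hr : n + 2 ≤ 2^(L+1)) :
    tauC n = tauP (3 * 2^L - n - 2) := by
  have f3 : (2:ℕ)^(L+1) = 2^L + 2^L := by rw [← two_mul, ← pow_succ']
  have hpL : 1 ≤ (2:ℕ)^L := Nat.one_le_two_pow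
  set a := 2^(L+1) - 1 - n with hadef
  have ha1 : 1 ≤ a := by omega
  have ha2 : a ≤ 2^L - 1 := by omega
  set m := 3 * 2^L - n - 2 with hmdef
  have hm : m = nu L + a := by simp only [nu]; omega
  -- tauP m = 1 + tauP a
  have hlogm : Nat.log 2 (m + 1) = L := by
    apply Nat.log_eq_of_pow_le_of_lt_pow
    · simp only [hm, nu]; omega
    · simp only [hm, nu]; omega
  have hstep := tauP_step' m L (by omega) hlogm
  have hinner : m + 1 - 2^L = a := by simp only [hm, nu]; omega
  rw [hinner] at hstep
  -- tauC n ≤ 1 + tauP a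
  obtain ⟨A, hA, hAcard⟩ := tauP_exists a
  have hle : tauC n ≤ 1 + tauP a := by
    have : IsSABP n {L+1} A := by
      rw [isSABP_iff]
      refine ⟨by omega, hA.1, ?_⟩
      rw [hA.2]
      simp only [nu]; omega
    have := tauC_le this
    omega
  -- tauC n ≥ 1 + tauP a
  have hge : 1 + tauP a ≤ tauC n := by
    obtain ⟨r, N, hS, heq⟩ := tauC_exists n (by omega)
    rw [isSABP_iff] at hS
    obtain ⟨hr1, hNpos, hNsum⟩ := hS
    have hnur : nu r = 2^r - 1 := rfl
    have hrL : L + 1 ≤ r := by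
      have h2 : n < 2^r := by omega
      have h3 : (2:ℕ)^L < 2^r := lt_of_le_of_lt hl h2
      have := (Nat.pow_lt_pow_iff_right (by norm_num : 1 < 2)).1 h3
      omega
    have hsumN : (N.map nu).sum = a + 2^(L+1) * (2^(r-L-1) - 1) := by
      have e2 : (2:ℕ)^(L+1) * (2^(r-L-1) - 1) = 2^r - 2^(L+1) := by
        rw [pow_mul_sub]; congr 2; omega
      rw [e2]
      have f4 : (2:ℕ)^(L+1) ≤ 2^r := Nat.pow_le_pow_right (by norm_num) (by omega)
      omega
    have hM := lemmaM L hL (r-L-1) a ha1 ha2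
    rw [← hsumN] at hM
    have hNabp : IsABP ((N.map nu).sum) N := ⟨hNpos, rfl⟩
    have := tauP_le hNabp
    omega
  omega

theorem stmt8 (n : ℕ) (hn : 1 ≤ n) :
    tauC n = tauP (dualf n) ∧ tauP n = tauC (dualf n) := by
  by_cases hspec : ∃ k : ℕ, 1 ≤ k ∧ n = 2 ^ k - 1
  · have hd : dualf n = n := by rw [dualf, if_pos hspec]
    obtain ⟨k, hk1, hk2⟩ := hspec
    have h1 : tauP n = 1 := by rw [hk2]; exact tauP_nu hk1
    have h2 : tauC n = 1 := by rw [hk2]; exact tauC_nu hk1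
    rw [hd, h1, h2]
    exact ⟨rfl, rfl⟩
  · have hd : dualf n = 3 * 2 ^ Nat.log 2 n - n - 2 := by rw [dualf, if_neg hspec]
    have hn1 : n ≠ 1 := fun h => hspec ⟨1, le_refl 1, by omega⟩
    have hn2 : 2 ≤ n := by omega
    have hL : 1 ≤ Nat.log 2 n := Nat.log_pos one_lt_two hn2
    have hl : 2 ^ Nat.log 2 n ≤ n := Nat.pow_log_le_self 2 (by omega)
    have hr0 : n < 2 ^ (Nat.log 2 n + 1) := Nat.lt_pow_succ_log_self one_lt_two n
    have hne : n ≠ 2 ^ (Nat.log 2 n + 1) - 1 := fun h => hspec ⟨Nat.log 2 n + 1, by omega, h⟩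
    have hr : n + 2 ≤ 2 ^ (Nat.log 2 n + 1) := by omega
    have h1 : tauC n = tauP (dualf n) := by
      rw [hd]; exact core n (Nat.log 2 n) hL hl hr
    have f3 : (2:ℕ) ^ (Nat.log 2 n + 1) = 2 ^ Nat.log 2 n + 2 ^ Nat.log 2 n := by
      rw [← two_mul, ← pow_succ']
    have hpL : 1 ≤ (2:ℕ) ^ Nat.log 2 n := Nat.one_le_two_pow
    have hm_l : 2 ^ Nat.log 2 n ≤ 3 * 2 ^ Nat.log 2 n - n - 2 := by omega
    have hm_r : (3 * 2 ^ Nat.log 2 n - n - 2) + 2 ≤ 2 ^ (Nat.log 2 n + 1) := by omega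
    have h2 := core (3 * 2 ^ Nat.log 2 n - n - 2) (Nat.log 2 n) hL hm_l hm_r
    have hmm : 3 * 2 ^ Nat.log 2 n - (3 * 2 ^ Nat.log 2 n - n - 2) - 2 = n := by omega
    rw [hmm] at h2
    exact ⟨h1, by rw [hd]; exact h2.symm⟩
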